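/- arXiv:1605.09148 — 5 statements merged into one kernel-verified Lean document; each statement's English description precedes it below -/
import Mathlib

section
/- Let Q ∈ ℝ^{m×n} be a nonzero matrix with nonzero columns q_1,…,q_n, let x_0 ∈ ℝ^m, and let x* be the unique point of minimum Euclidean norm in the affine space x_0 + Im(Q). Define a random sequence (x_t) starting at x_0 where, given x_t, an index i ∈ {1,…,n} is chosen independently with probability ‖q_i‖²/‖Q‖²_Frob and x_{t+1} = x_t − (x_tᵀq_i/‖q_i‖²)·q_i. Then for every t ≥ 0, 𝔼‖x_t − x*‖² ≤ (1 − σ²_min(Q)/‖Q‖²_Frob)^t · ‖x_0 − x*‖². -/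
open Matrix

/-- One step of the iteration `x ↦ x − (xᵀqᵢ/‖qᵢ‖²)·qᵢ`, where `qᵢ` is the
`i`-th column of `Q`. -/
noncomputable def kaczStep {m n : ℕ} (Q : Matrix (Fin m) (Fin n) ℝ)
    (x : Fin m → ℝ) (i : Fin n) : Fin m → ℝ :=
  x - ((x ⬝ᵥ fun r => Q r i) / ((fun r => Q r i) ⬝ᵥ fun r => Q r i)) • fun r => Q r i

private lemma quad_aux' {a b : ℝ} (hb : 0 ≤ b) (h : ∀ ε : ℝ, 0 ≤ 2*ε*a + ε^2*b) : a = 0 := by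
  by_contra ha
  have hb1 : (0:ℝ) < b + 1 := by linarith
  have h1 := h (-a/(b+1))
  have ha2 : 0 < a^2 := by positivity
  have hε : (-a/(b+1)) * (b+1) = -a := by field_simp
  nlinarith [mul_le_mul_of_nonneg_left h1 (by positivity : (0:ℝ) ≤ (b+1)^2), hε, ha2, hb1]

private lemma psd_key' {m n : ℕ} (Q : Matrix (Fin m) (Fin n) ℝ) (σsq : ℝ)
    (hlb : ∀ μ : ℝ, μ ≠ 0 → (∃ v : Fin n → ℝ, v ≠ 0 ∧ (Qᵀ * Q) *ᵥ v = μ • v) → σsq ≤ μ) :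
    (Qᵀ * Q * (Qᵀ * Q) - σsq • (Qᵀ * Q)).PosSemidef := by
  have hct : Qᴴ = Qᵀ := by ext i j; simp [conjTranspose_apply]
  have hA : (Qᵀ * Q).IsHermitian := by rw [← hct]; exact isHermitian_conjTranspose_mul_self Q
  have hApsd : (Qᵀ * Q).PosSemidef := by rw [← hct]; exact posSemidef_conjTranspose_mul_self Q
  set A := Qᵀ * Q with hAdef
  set U : Matrix (Fin n) (Fin n) ℝ := (hA.eigenvectorUnitary : Matrix (Fin n) (Fin n) ℝ) with hUdef
  set lam := hA.eigenvalues with hlamdef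
  have hUU : star U * U = 1 := Unitary.coe_star_mul_self hA.eigenvectorUnitary
  have hofReal : (RCLike.ofReal ∘ lam : Fin n → ℝ) = lam := rfl
  have hspec : A = U * diagonal lam * star U := by
    have := hA.spectral_theorem
    rwa [hofReal] at this
  set D := diagonal lam with hDdef
  have hlam0 : ∀ i, 0 ≤ lam i := fun i => hApsd.eigenvalues_nonneg i
  have hlamge : ∀ i, lam i = 0 ∨ σsq ≤ lam i := by
    intro i
    rcases eq_or_ne (lam i) 0 with h | h
    · exact Or.inl h
    · refine Or.inr (hlb _ h ⟨_, ?_, hA.mulVec_eigenvectorBasis i⟩)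
      intro hv
      exact hA.eigenvectorBasis.orthonormal.ne_zero i (by
        apply (WithLp.equiv 2 (Fin n → ℝ)).injective
        simpa using hv)
  have hd : ∀ i, 0 ≤ lam i * lam i - σsq * lam i := by
    intro i
    rcases hlamge i with h | h
    · simp [h]
    · nlinarith [hlam0 i]
  have hdiagPSD : (diagonal (fun i => lam i * lam i - σsq * lam i)).PosSemidef :=
    posSemidef_diagonal_iff.mpr hd
  have hDeq : diagonal (fun i => lam i * lam i - σsq * lam i) = D * D - σsq • D := by
    rw [hDdef, diagonal_mul_diagonal, ← diagonal_smul, ← diagonal_sub]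
    rfl
  have key : (U * D * star U) * (U * D * star U) = U * (D * D) * star U := by
    calc (U*D*star U)*(U*D*star U) = U*D*((star U*U)*(D*star U)) := by noncomm_ring
    _ = U*(D*D)*star U := by rw [hUU, one_mul]; noncomm_ring
  have h2 : U * (D*D) * star U = A*A := by rw [hspec, key]
  have h3 : U * (σsq•D) * star U = σsq • A := by
    rw [hspec, Matrix.mul_smul, Matrix.smul_mul]
  have hfin : U * (D*D - σsq•D) * star U = A*A - σsq•A := by
    rw [Matrix.mul_sub, Matrix.sub_mul, h2, h3]
  have := hdiagPSD.mul_mul_conjTranspose_same U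
  rw [hDeq, ← star_eq_conjTranspose, hfin] at this
  exact this

private lemma dot_shift' {m n : ℕ} (M : Matrix (Fin m) (Fin n) ℝ) (u : Fin m → ℝ)
    (v : Fin n → ℝ) : u ⬝ᵥ (M *ᵥ v) = (Mᵀ *ᵥ u) ⬝ᵥ v := by
  rw [dotProduct_mulVec, mulVec_transpose]

private lemma step_ineq' {m n : ℕ} (Q : Matrix (Fin m) (Fin n) ℝ) (σsq T : ℝ)
    (hTpos : 0 < T)
    (hsum : ∑ i : Fin n, ((fun r => Q r i) ⬝ᵥ fun r => Q r i) = T)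
    (hcols : ∀ i : Fin n, 0 < ((fun r => Q r i) ⬝ᵥ fun r => Q r i))
    (xstar : Fin m → ℝ) (horth : ∀ i : Fin n, (fun r => Q r i) ⬝ᵥ xstar = 0)
    (hkey : ∀ e : Fin m → ℝ, (∃ y, e = Q *ᵥ y) →
      σsq * (e ⬝ᵥ e) ≤ (Qᵀ *ᵥ e) ⬝ᵥ (Qᵀ *ᵥ e))
    (x : Fin m → ℝ) (hx : ∃ y, x - xstar = Q *ᵥ y) :
    ∑ i : Fin n, (((fun r => Q r i) ⬝ᵥ fun r => Q r i)/T) *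
        ((kaczStep Q x i - xstar) ⬝ᵥ (kaczStep Q x i - xstar))
      ≤ (1 - σsq/T) * ((x - xstar) ⬝ᵥ (x - xstar)) := by
  set e := x - xstar with he
  have hq0 : ∀ i : Fin n, x ⬝ᵥ (fun r => Q r i) = e ⬝ᵥ (fun r => Q r i) := by
    intro i
    have h1 := horth i
    rw [dotProduct_comm] at h1
    rw [he, sub_dotProduct, h1, sub_zero]
  have hterm : ∀ i : Fin n, (kaczStep Q x i - xstar) ⬝ᵥ (kaczStep Q x i - xstar)
      = e ⬝ᵥ e - (e ⬝ᵥ (fun r => Q r i))^2 / ((fun r => Q r i) ⬝ᵥ fun r => Q r i) := by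
    intro i
    have hb := hcols i
    unfold kaczStep
    rw [hq0 i]
    have hre : x - ((e ⬝ᵥ fun r => Q r i) / ((fun r => Q r i) ⬝ᵥ fun r => Q r i)) •
        (fun r => Q r i) - xstar
        = e - ((e ⬝ᵥ fun r => Q r i) / ((fun r => Q r i) ⬝ᵥ fun r => Q r i)) •
        (fun r => Q r i) := by
      rw [he]; abel
    rw [hre]
    have hcomm := dotProduct_comm (fun r => Q r i) e
    simp only [sub_dotProduct, dotProduct_sub, smul_dotProduct, dotProduct_smul,
      smul_eq_mul, hcomm]
    field_simp
    ring
  have hterm2 : ∀ i : Fin n,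
      (((fun r => Q r i) ⬝ᵥ fun r => Q r i)/T) *
        ((kaczStep Q x i - xstar) ⬝ᵥ (kaczStep Q x i - xstar))
      = (((fun r => Q r i) ⬝ᵥ fun r => Q r i) * (e ⬝ᵥ e))/T
          - (e ⬝ᵥ (fun r => Q r i))^2 / T := by
    intro i
    rw [hterm i]
    have hb := (hcols i).ne'
    field_simp
  rw [Finset.sum_congr rfl (fun i _ => hterm2 i), Finset.sum_sub_distrib,
    ← Finset.sum_div, ← Finset.sum_div, ← Finset.sum_mul, hsum]
  have ha2 : ∑ i : Fin n, (e ⬝ᵥ (fun r => Q r i))^2 = (Qᵀ *ᵥ e) ⬝ᵥ (Qᵀ *ᵥ e) := by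
    simp only [dotProduct, mulVec, transpose_apply, pow_two]
    refine Finset.sum_congr rfl fun i _ => ?_
    congr 1 <;> exact Finset.sum_congr rfl fun j _ => mul_comm _ _
  rw [ha2]
  obtain ⟨y, hy⟩ := hx
  have hk := hkey e ⟨y, hy⟩
  have hdiv : σsq * (e ⬝ᵥ e) / T ≤ ((Qᵀ *ᵥ e) ⬝ᵥ (Qᵀ *ᵥ e)) / T :=
    (div_le_div_iff_of_pos_right hTpos).mpr hk
  have h1 : T * (e ⬝ᵥ e) / T = e ⬝ᵥ e := by field_simp
  have h2 : (1 - σsq/T) * (e ⬝ᵥ e) = e ⬝ᵥ e - σsq * (e ⬝ᵥ e) / T := by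
    field_simp
  rw [h1, h2]
  linarith [hdiv]

private lemma sum_reduce' {X : Type*} {n t : ℕ} (p : Fin n → ℝ) (k : X → Fin n → X)
    (E : X → ℝ) (x : X) :
    ∑ ω : Fin (t+1) → Fin n, (∏ s, p (ω s)) * E ((List.ofFn ω).foldl k x)
    = ∑ i : Fin n, p i *
        ∑ ω : Fin t → Fin n, (∏ s, p (ω s)) * E ((List.ofFn ω).foldl k (k x i)) := by
  rw [← (Fin.consEquiv (fun _ : Fin (t+1) => Fin n)).sum_comp
    (fun ω => (∏ s, p (ω s)) * E ((List.ofFn ω).foldl k x))]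
  rw [Fintype.sum_prod_type]
  refine Finset.sum_congr rfl fun i _ => ?_
  rw [Finset.mul_sum]
  refine Finset.sum_congr rfl fun ω _ => ?_
  have h1 : ((Fin.consEquiv (fun _ : Fin (t+1) => Fin n)) (i, ω) : Fin (t+1) → Fin n)
      = Fin.cons i ω := rfl
  rw [h1, Fin.prod_univ_succ, List.ofFn_succ]
  simp only [Fin.cons_zero, Fin.cons_succ, List.foldl_cons, mul_assoc]

/-- Let `Q ∈ ℝ^{m×n}` be a nonzero matrix with nonzero columns
`q₁,…,qₙ`, let `x₀ ∈ ℝ^m`, and let `x*` be the (unique) point of minimum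
Euclidean norm in the affine space `x₀ + Im(Q)`. Define a random sequence
`(x_t)` starting at `x₀` where, given `x_t`, an index `i` is chosen
independently with probability `‖qᵢ‖²/‖Q‖²_Frob` and
`x_{t+1} = x_t − (x_tᵀqᵢ/‖qᵢ‖²)·qᵢ`. Then for every `t ≥ 0`,
`𝔼‖x_t − x*‖² ≤ (1 − σ²_min(Q)/‖Q‖²_Frob)^t · ‖x₀ − x*‖²`.
The expectation is written explicitly as the sum, over all sequences
`ω : Fin t → Fin n` of chosen indices, of the probability of `ω` times the
squared error of the resulting iterate; `‖Q‖²_Frob = trace (Qᵀ * Q)`, and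
`σ²_min(Q)` is the smallest nonzero eigenvalue of `QᵀQ`. -/
theorem stmt0 {m n : ℕ} (Q : Matrix (Fin m) (Fin n) ℝ) (hQ : Q ≠ 0)
    (hcols : ∀ i : Fin n, (fun r => Q r i) ≠ (0 : Fin m → ℝ))
    (x0 xstar : Fin m → ℝ)
    (hmem : ∃ y : Fin n → ℝ, xstar = x0 + Q *ᵥ y)
    (hmin : ∀ y : Fin n → ℝ, xstar ⬝ᵥ xstar ≤ (x0 + Q *ᵥ y) ⬝ᵥ (x0 + Q *ᵥ y))
    (σsq : ℝ)
    (hσ : IsLeast {μ : ℝ | μ ≠ 0 ∧ ∃ v : Fin n → ℝ, v ≠ 0 ∧ (Qᵀ * Q) *ᵥ v = μ • v} σsq)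
    (t : ℕ) :
    ∑ ω : Fin t → Fin n,
        (∏ s : Fin t,
            (((fun r => Q r (ω s)) ⬝ᵥ fun r => Q r (ω s)) / Matrix.trace (Qᵀ * Q))) *
          (((List.ofFn ω).foldl (kaczStep Q) x0 - xstar) ⬝ᵥ
            ((List.ofFn ω).foldl (kaczStep Q) x0 - xstar))
      ≤ (1 - σsq / Matrix.trace (Qᵀ * Q)) ^ t * ((x0 - xstar) ⬝ᵥ (x0 - xstar)) := by
  classical
  set T := Matrix.trace (Qᵀ * Q) with hTdef
  have htr : T = ∑ i : Fin n, ((fun r => Q r i) ⬝ᵥ fun r => Q r i) := by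
    simp [hTdef, Matrix.trace, Matrix.mul_apply, Matrix.diag, dotProduct]
  have hcolpos : ∀ i : Fin n, 0 < ((fun r => Q r i) ⬝ᵥ fun r => Q r i) := by
    intro i
    obtain ⟨r, hr⟩ : ∃ r, Q r i ≠ 0 := by
      by_contra hc; push_neg at hc; exact hcols i (funext fun r => hc r)
    have hh : ((fun r => Q r i) ⬝ᵥ fun r => Q r i) = ∑ r, Q r i * Q r i := rfl
    rw [hh]
    exact Finset.sum_pos' (fun j _ => mul_self_nonneg _)
      ⟨r, Finset.mem_univ r, mul_self_pos.mpr hr⟩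
  have hTpos : 0 < T := by
    rw [htr]
    rcases Nat.eq_zero_or_pos n with hn | hn
    · exfalso; apply hQ; subst hn; ext r c; exact c.elim0
    · haveI : Nonempty (Fin n) := Fin.pos_iff_nonempty.mp hn
      exact Finset.sum_pos (fun i _ => hcolpos i) Finset.univ_nonempty
  obtain ⟨y0, hy0⟩ := hmem
  have hdotnn : ∀ w : Fin m → ℝ, 0 ≤ w ⬝ᵥ w := fun w =>
    Finset.sum_nonneg fun i _ => mul_self_nonneg _
  have horthz : ∀ z : Fin n → ℝ, xstar ⬝ᵥ (Q *ᵥ z) = 0 := by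
    intro z
    apply quad_aux' (hdotnn (Q *ᵥ z))
    intro ε
    have h := hmin (y0 + ε • z)
    rw [mulVec_add, mulVec_smul] at h
    have hexp : (xstar + ε • (Q *ᵥ z)) ⬝ᵥ (xstar + ε • (Q *ᵥ z))
        = xstar ⬝ᵥ xstar + (2*ε*(xstar ⬝ᵥ (Q *ᵥ z)) + ε^2*((Q *ᵥ z) ⬝ᵥ (Q *ᵥ z))) := by
      simp only [add_dotProduct, dotProduct_add, smul_dotProduct, dotProduct_smul,
        smul_eq_mul, dotProduct_comm (Q *ᵥ z) xstar]
      ring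
    rw [show x0 + (Q *ᵥ y0 + ε • (Q *ᵥ z)) = xstar + ε • (Q *ᵥ z) by
      rw [hy0]; abel, hexp] at h
    linarith
  have horth : ∀ i : Fin n, (fun r => Q r i) ⬝ᵥ xstar = 0 := by
    intro i
    have h := horthz (Pi.single i 1)
    rw [mulVec_single] at h
    rw [dotProduct_comm]
    exact (by simpa [mul_one] using h : xstar ⬝ᵥ Q.col i = 0)
  have htB : (Qᵀ * Q)ᵀ = Qᵀ * Q := by rw [transpose_mul, transpose_transpose]
  have hpsd := psd_key' Q σsq (fun μ hμ hv => hσ.2 ⟨hμ, hv⟩)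
  have hkey : ∀ e : Fin m → ℝ, (∃ y, e = Q *ᵥ y) →
      σsq * (e ⬝ᵥ e) ≤ (Qᵀ *ᵥ e) ⬝ᵥ (Qᵀ *ᵥ e) := by
    rintro e ⟨y, rfl⟩
    have h := hpsd.dotProduct_mulVec_nonneg y
    have hstar : star y = y := by funext i; simp
    rw [hstar, sub_mulVec, smul_mulVec, dotProduct_sub, dotProduct_smul,
      smul_eq_mul] at h
    have e1 : (Q *ᵥ y) ⬝ᵥ (Q *ᵥ y) = y ⬝ᵥ ((Qᵀ * Q) *ᵥ y) := by
      rw [dot_shift' Q (Q *ᵥ y) y, mulVec_mulVec, dotProduct_comm]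
    have e2 : (Qᵀ *ᵥ (Q *ᵥ y)) ⬝ᵥ (Qᵀ *ᵥ (Q *ᵥ y))
        = y ⬝ᵥ ((Qᵀ * Q * (Qᵀ * Q)) *ᵥ y) := by
      rw [mulVec_mulVec, dot_shift' (Qᵀ * Q) ((Qᵀ * Q) *ᵥ y) y, htB, mulVec_mulVec,
        dotProduct_comm]
    rw [e1, e2]
    linarith
  -- σsq ≤ T
  have hσT : σsq ≤ T := by
    have hct : Qᴴ = Qᵀ := by ext i j; simp [conjTranspose_apply]
    have hA : (Qᵀ * Q).IsHermitian := by rw [← hct]; exact isHermitian_conjTranspose_mul_self Q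
    have hApsd : (Qᵀ * Q).PosSemidef := by rw [← hct]; exact posSemidef_conjTranspose_mul_self Q
    have htreq : T = ∑ i, hA.eigenvalues i := by
      rw [hTdef]
      conv_lhs => rw [hA.spectral_theorem]
      rw [Unitary.conjStarAlgAut_apply, trace_mul_cycle, Unitary.coe_star_mul_self, one_mul, trace_diagonal]
      rfl
    have hnonneg : ∀ i, 0 ≤ hA.eigenvalues i := fun i => hApsd.eigenvalues_nonneg i
    obtain ⟨i, hi⟩ : ∃ i, hA.eigenvalues i ≠ 0 := by
      by_contra hc; push_neg at hc
      rw [htreq] at hTpos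
      simp [hc] at hTpos
    have h1 : σsq ≤ hA.eigenvalues i := by
      refine hσ.2 ⟨hi, _, ?_, hA.mulVec_eigenvectorBasis i⟩
      intro hv
      exact hA.eigenvectorBasis.orthonormal.ne_zero i (by
        apply (WithLp.equiv 2 (Fin n → ℝ)).injective
        simpa using hv)
    have h2 : hA.eigenvalues i ≤ ∑ j, hA.eigenvalues j :=
      Finset.single_le_sum (fun j _ => hnonneg j) (Finset.mem_univ i)
    rw [htreq]
    linarith
  have hρ : 0 ≤ 1 - σsq / T := by
    rw [sub_nonneg]
    exact (div_le_one hTpos).mpr hσT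
  have hstep_mem : ∀ (x : Fin m → ℝ), (∃ y, x - xstar = Q *ᵥ y) →
      ∀ i, ∃ y, kaczStep Q x i - xstar = Q *ᵥ y := by
    rintro x ⟨y, hy⟩ i
    refine ⟨y - Pi.single i ((x ⬝ᵥ fun r => Q r i) / ((fun r => Q r i) ⬝ᵥ fun r => Q r i)), ?_⟩
    rw [mulVec_sub, ← hy, mulVec_single]
    unfold kaczStep
    funext r
    simp only [Pi.sub_apply, Pi.smul_apply, smul_eq_mul, op_smul_eq_smul, Matrix.col_apply]
    ring
  suffices H : ∀ (t : ℕ) (x : Fin m → ℝ), (∃ y, x - xstar = Q *ᵥ y) →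
      ∑ ω : Fin t → Fin n,
        (∏ s : Fin t, (((fun r => Q r (ω s)) ⬝ᵥ fun r => Q r (ω s)) / T)) *
          (((List.ofFn ω).foldl (kaczStep Q) x - xstar) ⬝ᵥ
            ((List.ofFn ω).foldl (kaczStep Q) x - xstar))
      ≤ (1 - σsq / T) ^ t * ((x - xstar) ⬝ᵥ (x - xstar)) by
    refine H t x0 ⟨-y0, ?_⟩
    rw [hy0, mulVec_neg]
    abel
  intro t
  induction t with
  | zero =>
    intro x hx
    rw [pow_zero, one_mul]
    rw [Fintype.sum_unique]
    simp
  | succ t ih =>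
    intro x hx
    rw [sum_reduce' (fun i => ((fun r => Q r i) ⬝ᵥ fun r => Q r i) / T) (kaczStep Q)
      (fun z => (z - xstar) ⬝ᵥ (z - xstar)) x]
    have hPnn : ∀ i : Fin n, 0 ≤ ((fun r => Q r i) ⬝ᵥ fun r => Q r i) / T :=
      fun i => div_nonneg (hcolpos i).le hTpos.le
    calc ∑ i : Fin n, (((fun r => Q r i) ⬝ᵥ fun r => Q r i) / T) *
          ∑ ω : Fin t → Fin n,
            (∏ s : Fin t, (((fun r => Q r (ω s)) ⬝ᵥ fun r => Q r (ω s)) / T)) *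
              (((List.ofFn ω).foldl (kaczStep Q) (kaczStep Q x i) - xstar) ⬝ᵥ
                ((List.ofFn ω).foldl (kaczStep Q) (kaczStep Q x i) - xstar))
        ≤ ∑ i : Fin n, (((fun r => Q r i) ⬝ᵥ fun r => Q r i) / T) *
            ((1 - σsq / T) ^ t *
              ((kaczStep Q x i - xstar) ⬝ᵥ (kaczStep Q x i - xstar))) := by
          refine Finset.sum_le_sum fun i _ => ?_
          exact mul_le_mul_of_nonneg_left (ih (kaczStep Q x i) (hstep_mem x hx i)) (hPnn i)
      _ = (1 - σsq / T) ^ t *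
            ∑ i : Fin n, (((fun r => Q r i) ⬝ᵥ fun r => Q r i) / T) *
              ((kaczStep Q x i - xstar) ⬝ᵥ (kaczStep Q x i - xstar)) := by
          rw [Finset.mul_sum]
          exact Finset.sum_congr rfl fun i _ => by ring
      _ ≤ (1 - σsq / T) ^ t * ((1 - σsq / T) * ((x - xstar) ⬝ᵥ (x - xstar))) := by
          refine mul_le_mul_of_nonneg_left ?_ (pow_nonneg hρ t)
          exact step_ineq' Q σsq T hTpos htr.symm hcolpos xstar horth hkey x hx
      _ = (1 - σsq / T) ^ (t+1) * ((x - xstar) ⬝ᵥ (x - xstar)) := by ring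
end

section
/- Let Q ∈ ℝ^{m×n} be a nonzero matrix with nonzero columns q_1,…,q_n, let x_0 ∈ ℝ^m, and let x* be the minimum-norm point of the affine space x_0 + Im(Q). Then for every x ∈ x_0 + Im(Q): Σ_{i=1}^n (‖q_i‖²/‖Q‖²_Frob) · ‖(x − (⟨x,q_i⟩/‖q_i‖²)q_i) − x*‖² ≤ (1 − σ²_min(Q)/‖Q‖²_Frob) · ‖x − x*‖². -/
open Matrix

lemma dot_self_nonneg {m : ℕ} (v : Fin m → ℝ) : 0 ≤ v ⬝ᵥ v :=
  Finset.sum_nonneg fun i _ => mul_self_nonneg (v i)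

lemma key_spectral {n : ℕ} (A : Matrix (Fin n) (Fin n) ℝ) (hA : A.IsHermitian)
    (σsq : ℝ) (hlb : ∀ i, hA.eigenvalues i = 0 ∨ σsq ≤ hA.eigenvalues i)
    (hnn : ∀ i, 0 ≤ hA.eigenvalues i) (z : Fin n → ℝ) :
    σsq * (z ⬝ᵥ A *ᵥ z) ≤ (A *ᵥ z) ⬝ᵥ (A *ᵥ z) := by
  set U : Matrix (Fin n) (Fin n) ℝ := (hA.eigenvectorUnitary : Matrix (Fin n) (Fin n) ℝ) with hU
  set D : Matrix (Fin n) (Fin n) ℝ := diagonal hA.eigenvalues with hD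
  have hspec : A = U * D * star U := by
    have := hA.spectral_theorem
    simpa [hU, hD, RCLike.ofReal_real_eq_id] using this
  have hUU : star U * U = 1 := Unitary.coe_star_mul_self hA.eigenvectorUnitary
  set w : Fin n → ℝ := star U *ᵥ z with hw
  have hAz : A *ᵥ z = U *ᵥ (D *ᵥ w) := by
    rw [hspec, ← mulVec_mulVec, ← mulVec_mulVec]
  have hstarU : (star U : Matrix (Fin n) (Fin n) ℝ) = Uᵀ := by
    ext i j; simp [conjTranspose_apply]
  have h1 : z ⬝ᵥ A *ᵥ z = ∑ i, hA.eigenvalues i * (w i)^2 := by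
    rw [hAz, dotProduct_mulVec]
    have : z ᵥ* U = w := by rw [hw, hstarU, mulVec_transpose]
    rw [this]
    simp [hD, mulVec, dotProduct, diagonal, Finset.mul_sum]
    apply Finset.sum_congr rfl
    intro i _
    ring
  have h2 : (A *ᵥ z) ⬝ᵥ (A *ᵥ z) = ∑ i, (hA.eigenvalues i)^2 * (w i)^2 := by
    rw [hAz]
    have hortho : (U *ᵥ (D *ᵥ w)) ⬝ᵥ (U *ᵥ (D *ᵥ w)) = (D *ᵥ w) ⬝ᵥ (D *ᵥ w) := by
      rw [dotProduct_mulVec]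
      rw [vecMul_mulVec, ← hstarU, hUU, vecMul_one]
    rw [hortho]
    simp [hD, mulVec, dotProduct, diagonal]
    apply Finset.sum_congr rfl
    intro i _
    ring
  rw [h1, h2, Finset.mul_sum]
  apply Finset.sum_le_sum
  intro i _
  rcases hlb i with h | h
  · simp [h]
  · nlinarith [mul_nonneg (mul_nonneg (hnn i) (sub_nonneg.mpr h)) (sq_nonneg (w i))]

/-- Let `Q ∈ ℝ^{m×n}` be a nonzero matrix with nonzero columns
`q₁,…,qₙ`, let `x₀ ∈ ℝ^m`, and let `x*` be the minimum-norm point of the affine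
space `x₀ + Im(Q)`. Then for every `x ∈ x₀ + Im(Q)`:
`Σᵢ (‖qᵢ‖²/‖Q‖²_Frob) · ‖(x − (⟨x,qᵢ⟩/‖qᵢ‖²)qᵢ) − x*‖²
   ≤ (1 − σ²_min(Q)/‖Q‖²_Frob) · ‖x − x*‖²`,
where `‖Q‖²_Frob = trace (Qᵀ * Q)` and `σ²_min(Q)` is the smallest nonzero
eigenvalue of `QᵀQ`. (Squared Euclidean norms are written as dot products.) -/
theorem stmt4 {m n : ℕ} (Q : Matrix (Fin m) (Fin n) ℝ) (hQ : Q ≠ 0)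
    (hcols : ∀ i : Fin n, (fun r => Q r i) ≠ (0 : Fin m → ℝ))
    (x0 xstar : Fin m → ℝ)
    (hmem : ∃ y : Fin n → ℝ, xstar = x0 + Q *ᵥ y)
    (hmin : ∀ y : Fin n → ℝ, xstar ⬝ᵥ xstar ≤ (x0 + Q *ᵥ y) ⬝ᵥ (x0 + Q *ᵥ y))
    (σsq : ℝ)
    (hσ : IsLeast {μ : ℝ | μ ≠ 0 ∧ ∃ v : Fin n → ℝ, v ≠ 0 ∧ (Qᵀ * Q) *ᵥ v = μ • v} σsq) :
    ∀ x : Fin m → ℝ, (∃ y : Fin n → ℝ, x = x0 + Q *ᵥ y) →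
      ∑ i : Fin n,
          ((((fun r => Q r i) ⬝ᵥ fun r => Q r i) / Matrix.trace (Qᵀ * Q)) *
            ((kaczStep Q x i - xstar) ⬝ᵥ (kaczStep Q x i - xstar)))
        ≤ (1 - σsq / Matrix.trace (Qᵀ * Q)) * ((x - xstar) ⬝ᵥ (x - xstar)) := by
  classical
  obtain ⟨ystar, hys⟩ := hmem
  rintro x ⟨y, hx⟩
  -- notation
  set T : ℝ := Matrix.trace (Qᵀ * Q) with hT
  have hn : 0 < n := by
    rcases Nat.eq_zero_or_pos n with h | h
    · exfalso; apply hQ; subst h; ext r i; exact i.elim0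
    · exact h
  have hspos : ∀ i : Fin n, 0 < (fun r => Q r i) ⬝ᵥ (fun r => Q r i) := by
    intro i
    exact lt_of_le_of_ne (dot_self_nonneg _)
      (fun h => hcols i (dotProduct_self_eq_zero.mp h.symm))
  have hTsum : T = ∑ i : Fin n, (fun r => Q r i) ⬝ᵥ (fun r => Q r i) := by
    simp [hT, Matrix.trace, Matrix.diag, mul_apply, dotProduct]
  have hTpos : 0 < T := by
    rw [hTsum]
    exact Finset.sum_pos (fun i _ => hspos i) (Finset.univ_nonempty_iff.mpr ⟨⟨0, hn⟩⟩)
  -- orthogonality of xstar to the range of Q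
  have hexpand2 : ∀ u : Fin m → ℝ, (xstar + u) ⬝ᵥ (xstar + u)
      = xstar ⬝ᵥ xstar + 2*(xstar ⬝ᵥ u) + u ⬝ᵥ u := by
    intro u
    simp [dotProduct_add, add_dotProduct, dotProduct_comm u xstar]
    ring
  have hperp : ∀ v : Fin n → ℝ, xstar ⬝ᵥ (Q *ᵥ v) = 0 := by
    intro v
    set c := xstar ⬝ᵥ (Q *ᵥ v) with hc
    set s := (Q *ᵥ v) ⬝ᵥ (Q *ᵥ v) with hsv
    have hs0 : 0 ≤ s := dot_self_nonneg _
    have hkey : ∀ t : ℝ, 0 ≤ 2*t*c + t^2*s := by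
      intro t
      have h := hmin (ystar + t • v)
      have hx2 : x0 + Q *ᵥ (ystar + t • v) = xstar + t • (Q *ᵥ v) := by
        rw [hys, mulVec_add, mulVec_smul]; abel
      rw [hx2, hexpand2] at h
      have e1 : xstar ⬝ᵥ (t • (Q *ᵥ v)) = t * c := by
        rw [dotProduct_smul, smul_eq_mul, hc]
      have e2 : (t • (Q *ᵥ v)) ⬝ᵥ (t • (Q *ᵥ v)) = t^2 * s := by
        rw [smul_dotProduct, dotProduct_smul, smul_eq_mul, smul_eq_mul, hsv]; ring
      rw [e1, e2] at h
      linarith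
    by_contra hc0
    have hs1 : (0:ℝ) < s + 1 := by linarith
    have h := hkey (-c/(s+1))
    have hEq : 2*(-c/(s+1))*c + (-c/(s+1))^2*s = -(c^2*(s+2))/(s+1)^2 := by
      field_simp
      ring
    rw [hEq] at h
    have h4 : 0 ≤ -(c^2*(s+2)) := by
      have h5 := mul_nonneg h (le_of_lt (pow_pos hs1 2))
      rwa [div_mul_cancel₀ _ (ne_of_gt (pow_pos hs1 2))] at h5
    have h6 : 0 < c^2 := pow_pos (abs_pos.mpr hc0) 2 |>.trans_le (by rw [sq_abs])
    nlinarith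
  -- the error vector
  set e : Fin m → ℝ := x - xstar with he
  have heQ : e = Q *ᵥ (y - ystar) := by
    rw [he, hx, hys, mulVec_sub]; abel
  have hcol : ∀ i : Fin n, (fun r => Q r i) = Q *ᵥ Pi.single i 1 := by
    intro i; funext r; simp [mulVec_single]
  have hxq : ∀ i : Fin n, x ⬝ᵥ (fun r => Q r i) = e ⬝ᵥ (fun r => Q r i) := by
    intro i
    have : xstar ⬝ᵥ (fun r => Q r i) = 0 := by rw [hcol i]; exact hperp _
    rw [he, sub_dotProduct, this, sub_zero]
  set c : Fin n → ℝ := fun i => e ⬝ᵥ (fun r => Q r i) with hcdef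
  -- per-term computation
  have hterm : ∀ i : Fin n, (kaczStep Q x i - xstar) ⬝ᵥ (kaczStep Q x i - xstar)
      = e ⬝ᵥ e - (c i)^2 / ((fun r => Q r i) ⬝ᵥ (fun r => Q r i)) := by
    intro i
    set si := (fun r => Q r i) ⬝ᵥ (fun r => Q r i) with hsi
    have hsine : si ≠ 0 := ne_of_gt (hspos i)
    have hstep : kaczStep Q x i - xstar = e - (c i / si) • (fun r => Q r i) := by
      unfold kaczStep
      rw [hxq i, he]
      exact sub_right_comm x _ xstar
    rw [hstep]
    have hx3 : (e - (c i / si) • (fun r => Q r i)) ⬝ᵥ (e - (c i / si) • (fun r => Q r i))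
        = e ⬝ᵥ e - 2*(c i / si)*(c i) + (c i / si)^2 * si := by
      simp [dotProduct_sub, sub_dotProduct, smul_dotProduct, dotProduct_smul, smul_eq_mul,
        dotProduct_comm (fun r => Q r i) e, ← hcdef, ← hsi]
      ring
    rw [hx3]
    field_simp
    ring
  -- sum computation
  have hLHS : ∑ i : Fin n,
      ((((fun r => Q r i) ⬝ᵥ fun r => Q r i) / T) *
        ((kaczStep Q x i - xstar) ⬝ᵥ (kaczStep Q x i - xstar)))
      = e ⬝ᵥ e - (∑ i : Fin n, (c i)^2) / T := by
    have hsummand : ∀ i ∈ Finset.univ, (((fun r => Q r i) ⬝ᵥ fun r => Q r i) / T) *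
          ((kaczStep Q x i - xstar) ⬝ᵥ (kaczStep Q x i - xstar))
        = (((fun r => Q r i) ⬝ᵥ fun r => Q r i) * (e ⬝ᵥ e)) / T - (c i)^2 / T := by
      intro i _
      rw [hterm i]
      have hsine : ((fun r => Q r i) ⬝ᵥ fun r => Q r i) ≠ 0 := ne_of_gt (hspos i)
      field_simp
    rw [Finset.sum_congr rfl hsummand, Finset.sum_sub_distrib, ← Finset.sum_div,
      ← Finset.sum_div, ← Finset.sum_mul, ← hTsum]
    rw [mul_comm, mul_div_assoc, div_self (ne_of_gt hTpos), mul_one]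
  rw [hLHS]
  -- the spectral bound
  have hA : (Qᵀ * Q).IsHermitian := by simpa using isHermitian_conjTranspose_mul_self Q
  have hPSD : (Qᵀ * Q).PosSemidef := by
    have h := posSemidef_conjTranspose_mul_self Q
    have : Qᴴ = Qᵀ := by ext i j; simp
    rwa [this] at h
  have hnn : ∀ i, 0 ≤ hA.eigenvalues i := fun i => hPSD.eigenvalues_nonneg i
  have hlb : ∀ i, hA.eigenvalues i = 0 ∨ σsq ≤ hA.eigenvalues i := by
    intro i
    rcases eq_or_ne (hA.eigenvalues i) 0 with h | h
    · exact Or.inl h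
    · exact Or.inr (hσ.2 ⟨h, ⇑(hA.eigenvectorBasis i),
        by simpa using hA.eigenvectorBasis.orthonormal.ne_zero i, hA.mulVec_eigenvectorBasis i⟩)
  have hkey := key_spectral (Qᵀ * Q) hA σsq hlb hnn (y - ystar)
  -- translate the spectral bound into our quantities
  have hee : e ⬝ᵥ e = (y - ystar) ⬝ᵥ (Qᵀ * Q) *ᵥ (y - ystar) := by
    rw [heQ, ← mulVec_mulVec]
    conv_rhs => rw [dotProduct_mulVec, vecMul_transpose]
  have hsumc : ∑ i : Fin n, (c i)^2 = ((Qᵀ * Q) *ᵥ (y - ystar)) ⬝ᵥ ((Qᵀ * Q) *ᵥ (y - ystar)) := by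
    have hci : ∀ i, c i = ((Qᵀ * Q) *ᵥ (y - ystar)) i := by
      intro i
      rw [hcdef, heQ, ← mulVec_mulVec]
      simp [mulVec, dotProduct, transpose_apply, mul_comm]
    simp only [dotProduct]
    exact Finset.sum_congr rfl fun i _ => by rw [hci i]; ring
  rw [← hsumc, ← hee] at hkey
  have hdiv : σsq * (e ⬝ᵥ e) / T ≤ (∑ i : Fin n, (c i)^2) / T :=
    (div_le_div_iff_of_pos_right hTpos).mpr hkey
  have hrhs : (1 - σsq / T) * (e ⬝ᵥ e) = e ⬝ᵥ e - σsq * (e ⬝ᵥ e) / T := by ring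
  rw [hrhs]
  linarith
end

section
/- Let n < m, let A = (E F) be an n×m real matrix with E ∈ ℝ^{n×n} invertible and F ∈ ℝ^{n×(m−n)}, let b ∈ ℝ^n, and set x_0 = [E^{−1}b ; 0] ∈ ℝ^m. Then A x_0 = b, and for every x ∈ ℝ^m with Ax = b one has ‖x_0‖² ≤ (n + ‖E^{−1}F‖²_Frob)·‖x‖². -/
open Matrix

private lemma aux_cs (a s r V : ℝ) (hr : 0 ≤ r) (hV : 0 ≤ V) (hs : s ^ 2 ≤ r * V) :
    (a + s) ^ 2 ≤ (1 + r) * (a ^ 2 + V) := by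
  rcases eq_or_lt_of_le hr with h | h
  · have hs0 : s = 0 := by nlinarith [sq_nonneg s]
    subst hs0
    nlinarith [mul_nonneg hr (add_nonneg (sq_nonneg a) hV)]
  · have key : r * (a + s) ^ 2 ≤ r * ((1 + r) * (a ^ 2 + V)) := by
      nlinarith [sq_nonneg (r * a - s), mul_le_mul_of_nonneg_left hs (le_of_lt h)]
    exact le_of_mul_le_mul_left key h

/-- Let `n < m`, let `A = (E F)` be an `n×m` real matrix with
`E ∈ ℝ^{n×n}` invertible and `F ∈ ℝ^{n×(m−n)}`, let `b ∈ ℝ^n`, and set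
`x₀ = [E⁻¹b ; 0] ∈ ℝ^m`. Then `A x₀ = b`, and for every `x ∈ ℝ^m` with `Ax = b`
one has `‖x₀‖² ≤ (n + ‖E⁻¹F‖²_Frob)·‖x‖²` (squared Euclidean norms written as
dot products, the squared Frobenius norm as `trace (Mᵀ * M)`). -/
theorem stmt7 {n m : ℕ} (hnm : n < m)
    (E : Matrix (Fin n) (Fin n) ℝ) (hE : IsUnit E)
    (F : Matrix (Fin n) (Fin (m - n)) ℝ)
    (A : Matrix (Fin n) (Fin n ⊕ Fin (m - n)) ℝ)
    (hA : A = Matrix.fromCols E F)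
    (b : Fin n → ℝ)
    (x0 : Fin n ⊕ Fin (m - n) → ℝ)
    (hx0 : x0 = Sum.elim (E⁻¹ *ᵥ b) 0) :
    A *ᵥ x0 = b ∧
    ∀ x : Fin n ⊕ Fin (m - n) → ℝ, A *ᵥ x = b →
      x0 ⬝ᵥ x0 ≤ ((n : ℝ) + Matrix.trace ((E⁻¹ * F)ᵀ * (E⁻¹ * F))) * (x ⬝ᵥ x) := by
  subst hA hx0
  have hEd : IsUnit E.det := (Matrix.isUnit_iff_isUnit_det E).mp hE
  constructor
  · rw [Matrix.fromCols_mulVec_sumElim, Matrix.mulVec_zero, add_zero,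
      Matrix.mulVec_mulVec, Matrix.mul_nonsing_inv E hEd, Matrix.one_mulVec]
  intro x hx
  set M : Matrix (Fin n) (Fin (m - n)) ℝ := E⁻¹ * F with hM
  set u : Fin n → ℝ := fun i => x (Sum.inl i) with hu
  set v : Fin (m - n) → ℝ := fun j => x (Sum.inr j) with hv
  have hxe : x = Sum.elim u v := by funext i; cases i <;> rfl
  -- key identity: E⁻¹ b = u + M v
  have hw : E⁻¹ *ᵥ b = u + M *ᵥ v := by
    rw [← hx, hxe, Matrix.fromCols_mulVec_sumElim, Matrix.mulVec_add,
      Matrix.mulVec_mulVec, Matrix.nonsing_inv_mul E hEd, Matrix.one_mulVec, hM,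
      ← Matrix.mulVec_mulVec]
  -- abbreviations
  set U : ℝ := ∑ i, (u i) ^ 2 with hU
  set V : ℝ := ∑ j, (v j) ^ 2 with hV
  set r : Fin n → ℝ := fun i => ∑ j, (M i j) ^ 2 with hr
  set R : ℝ := ∑ i, r i with hR
  have hUnn : 0 ≤ U := Finset.sum_nonneg fun i _ => sq_nonneg _
  have hVnn : 0 ≤ V := Finset.sum_nonneg fun j _ => sq_nonneg _
  have hrnn : ∀ i, 0 ≤ r i := fun i => Finset.sum_nonneg fun j _ => sq_nonneg _
  have hRnn : 0 ≤ R := Finset.sum_nonneg fun i _ => hrnn i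
  -- trace equals R
  have htr : Matrix.trace (Mᵀ * M) = R := by
    rw [hR]
    simp only [Matrix.trace, Matrix.diag, Matrix.mul_apply, Matrix.transpose_apply, hr]
    rw [Finset.sum_comm]
    simp [sq]
  -- dot products
  have hdot0 : Sum.elim (E⁻¹ *ᵥ b) (0 : Fin (m - n) → ℝ) ⬝ᵥ Sum.elim (E⁻¹ *ᵥ b) (0 : Fin (m - n) → ℝ)
      = ∑ i, (u i + (M *ᵥ v) i) ^ 2 := by
    rw [sumElim_dotProduct_sumElim, hw]
    simp [dotProduct, sq]
  have hxdot : x ⬝ᵥ x = U + V := by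
    rw [hxe, sumElim_dotProduct_sumElim, hU, hV]
    simp [dotProduct, sq]
  -- per-coordinate Cauchy–Schwarz
  have hs : ∀ i, ((M *ᵥ v) i) ^ 2 ≤ r i * V := by
    intro i
    simpa [Matrix.mulVec, dotProduct, hr, hV] using
      Finset.sum_mul_sq_le_sq_mul_sq Finset.univ (fun j => M i j) v
  have step1 : ∑ i, (u i + (M *ᵥ v) i) ^ 2 ≤ ∑ i, (1 + r i) * ((u i) ^ 2 + V) :=
    Finset.sum_le_sum fun i _ => aux_cs _ _ _ _ (hrnn i) hVnn (hs i)
  have e3 : ∑ i, r i * (u i) ^ 2 ≤ R * U := by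
    calc ∑ i, r i * (u i) ^ 2 ≤ ∑ i, r i * U :=
          Finset.sum_le_sum fun i _ => mul_le_mul_of_nonneg_left
            (Finset.single_le_sum (fun j _ => sq_nonneg (u j)) (Finset.mem_univ i)) (hrnn i)
      _ = R * U := by rw [hR, ← Finset.sum_mul]
  have e4 : U ≤ (n : ℝ) * U := by
    rcases Nat.eq_zero_or_pos n with h0 | hpos
    · subst h0
      have : U = 0 := by rw [hU]; simp
      simp [this]
    · have h1 : (1 : ℝ) ≤ (n : ℝ) := by exact_mod_cast hpos
      nlinarith
  have step2 : ∑ i, (1 + r i) * ((u i) ^ 2 + V) ≤ ((n : ℝ) + R) * (U + V) := by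
    have hsum : ∀ i ∈ Finset.univ, (1 + r i) * ((u i) ^ 2 + V)
        = (u i) ^ 2 + V + r i * (u i) ^ 2 + r i * V := fun i _ => by ring
    rw [Finset.sum_congr rfl hsum, Finset.sum_add_distrib, Finset.sum_add_distrib,
      Finset.sum_add_distrib]
    have e1 : ∑ _i : Fin n, V = (n : ℝ) * V := by
      rw [Finset.sum_const, Finset.card_univ, Fintype.card_fin, nsmul_eq_mul]
    have e2 : ∑ i, r i * V = R * V := by rw [hR, ← Finset.sum_mul]
    rw [e1, e2]
    have hUsum : ∑ i, (u i) ^ 2 = U := hU.symm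
    rw [hUsum]
    nlinarith [e3, e4]
  rw [hdot0, htr, hxdot]
  exact le_trans step1 step2
end

section
/- If Q = CD is a k-sparse factorization of Q ∈ ℝ^{m×n} with C ∈ ℝ^{m×p} and D ∈ ℝ^{p×n}, then: (i) for every column c_i of C, |FO(c_i)| ≤ k; (ii) every row of C has at most k nonzero entries (C is k-row sparse); and (iii) every column of D has at most k nonzero entries (every column of D is k-sparse). -/
open Matrix Finset

/-- The support of a vector: the set of indices of its nonzero entries. -/
noncomputable def vsupp {α : Type*} [Fintype α] (v : α → ℝ) : Finset α := by
  classical exact Finset.univ.filter fun i => v i ≠ 0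

/-- The forward overlap `FO(cᵢ)` of the `i`-th column of `C`: the set of column
indices `j ≥ i` whose support overlaps the support of column `i`. -/
noncomputable def FO {α β : Type*} [Fintype α] [Fintype β] [LinearOrder β]
    (C : Matrix α β ℝ) (i : β) : Finset β := by
  classical
  exact Finset.univ.filter fun j =>
    i ≤ j ∧ ((vsupp fun r => C r i) ∩ (vsupp fun r => C r j)).Nonempty

/-- `Q = CD` is a `k`-sparse factorization: every column of `C` and every row of
`D` is nonzero, and for every column `d_j` of `D`,
`|⋃_{i ∈ supp(d_j)} FO(c_i)| ≤ k`. -/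
noncomputable def IsSparseFactorization {α β γ : Type*}
    [Fintype α] [Fintype β] [Fintype γ] [LinearOrder γ]
    (Q : Matrix α β ℝ) (C : Matrix α γ ℝ) (D : Matrix γ β ℝ) (k : ℕ) : Prop := by
  classical
  exact Q = C * D ∧
    (∀ i : γ, (fun r => C r i) ≠ (0 : α → ℝ)) ∧
    (∀ i : γ, (fun j => D i j) ≠ (0 : β → ℝ)) ∧
    ∀ j : β, ((vsupp fun i => D i j).biUnion fun i => FO C i).card ≤ k

/-- If `Q = CD` is a `k`-sparse factorization of
`Q ∈ ℝ^{m×n}` with `C ∈ ℝ^{m×p}` and `D ∈ ℝ^{p×n}`, then: (i) for every column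
`cᵢ` of `C`, `|FO(cᵢ)| ≤ k`; (ii) every row of `C` has at most `k` nonzero
entries (`C` is `k`-row sparse); and (iii) every column of `D` has at most `k`
nonzero entries. -/
theorem stmt8 {m n p : ℕ} (Q : Matrix (Fin m) (Fin n) ℝ)
    (C : Matrix (Fin m) (Fin p) ℝ) (D : Matrix (Fin p) (Fin n) ℝ) (k : ℕ)
    (h : IsSparseFactorization Q C D k) :
    (∀ i : Fin p, (FO C i).card ≤ k) ∧
    (∀ r : Fin m, (vsupp fun j => C r j).card ≤ k) ∧
    (∀ j : Fin n, (vsupp fun i => D i j).card ≤ k) := by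
  obtain ⟨-, hC, hD, hk⟩ := h
  have memFO : ∀ i : Fin p, i ∈ FO C i := by
    intro i
    have : (fun r => C r i) ≠ (0 : Fin m → ℝ) := hC i
    have hne : (vsupp fun r => C r i).Nonempty := by
      rw [Finset.nonempty_iff_ne_empty]
      intro he
      apply this
      funext r
      by_contra hr
      replace hr : C r i ≠ 0 := by simpa using hr
      have : r ∈ vsupp fun r => C r i := by simp [vsupp, hr]
      simp [he] at this
    simp only [FO, Finset.mem_filter, Finset.mem_univ, true_and]
    exact ⟨le_refl i, by simpa using hne⟩
  have part1 : ∀ i : Fin p, (FO C i).card ≤ k := by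
    intro i
    have : (fun j => D i j) ≠ (0 : Fin n → ℝ) := hD i
    obtain ⟨j, hj⟩ : ∃ j, D i j ≠ 0 := by
      by_contra hcon
      push_neg at hcon
      exact this (funext hcon)
    have hsub : FO C i ⊆ (vsupp fun i => D i j).biUnion fun i => FO C i := by
      intro x hx
      exact Finset.mem_biUnion.mpr ⟨i, by simp [vsupp, hj], hx⟩
    refine le_trans (Finset.card_le_card hsub) ?_
    convert hk j using 2
  refine ⟨part1, ?_, ?_⟩
  · intro r
    by_cases hemp : (vsupp fun j => C r j).Nonempty
    · obtain ⟨i0, hi0mem, hi0min⟩ := Finset.exists_min_image _ id hemp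
      have hsub : (vsupp fun j => C r j) ⊆ FO C i0 := by
        intro j hj
        simp only [vsupp, Finset.mem_filter, Finset.mem_univ, true_and] at hj hi0mem
        simp only [FO, Finset.mem_filter, Finset.mem_univ, true_and]
        refine ⟨hi0min j (by simp [vsupp, hj]), ⟨r, ?_⟩⟩
        simp [vsupp, hi0mem, hj]
      exact le_trans (Finset.card_le_card hsub) (part1 i0)
    · rw [Finset.not_nonempty_iff_eq_empty] at hemp
      simp [hemp]
  · intro j
    have hsub : (vsupp fun i => D i j) ⊆ (vsupp fun i => D i j).biUnion fun i => FO C i := by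
      intro i hi
      exact Finset.mem_biUnion.mpr ⟨i, hi, memFO i⟩
    refine le_trans (Finset.card_le_card hsub) ?_
    convert hk j using 2
end

section
/- Let Q_1 = C_1 D_1 be a k_1-sparse factorization of Q_1 ∈ ℝ^{m_1×n} and Q_2 = C_2 D_2 a k_2-sparse factorization of Q_2 ∈ ℝ^{m_2×n}. Form the block matrices C = diag(C_1, C_2) (block diagonal, with the columns of C_1 preceding those of C_2) and D = [D_1 ; D_2] (vertical stacking). Then [Q_1 ; Q_2] = CD and this factorization is (k_1 + k_2)-sparse: for every column d_j of D, |⋃_{i ∈ supp(d_j)} FO(c_i)| ≤ k_1 + k_2, where the forward overlaps are computed with respect to the column ordering of C. -/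
open Matrix Finset

lemma mem_vsupp {α : Type*} [Fintype α] {v : α → ℝ} {i : α} :
    i ∈ vsupp v ↔ v i ≠ 0 := by simp [vsupp]

lemma mem_FO {α β : Type*} [Fintype α] [Fintype β] [LinearOrder β]
    {C : Matrix α β ℝ} {i j : β} :
    j ∈ FO C i ↔ i ≤ j ∧ ∃ r, C r i ≠ 0 ∧ C r j ≠ 0 := by
  simp only [FO, Finset.mem_filter, Finset.mem_univ, true_and, Finset.Nonempty,
    Finset.mem_inter, mem_vsupp]

set_option maxRecDepth 10000 in
/-- Let `Q₁ = C₁D₁` be a `k₁`-sparse factorization of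
`Q₁ ∈ ℝ^{m₁×n}` and `Q₂ = C₂D₂` a `k₂`-sparse factorization of `Q₂ ∈ ℝ^{m₂×n}`.
Form `C = diag(C₁, C₂)` (block diagonal, the columns of `C₁` preceding those of
`C₂`, realized by reindexing the column sum type along `finSumFinEquiv`) and
`D = [D₁ ; D₂]` (vertical stacking). Then `[Q₁ ; Q₂] = CD` and this
factorization is `(k₁ + k₂)`-sparse: for every column `d_j` of `D`,
`|⋃_{i ∈ supp(d_j)} FO(c_i)| ≤ k₁ + k₂`, the forward overlaps being computed
with respect to the column ordering of `C`. -/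
theorem stmt10 {m₁ m₂ n p₁ p₂ : ℕ}
    (Q₁ : Matrix (Fin m₁) (Fin n) ℝ) (C₁ : Matrix (Fin m₁) (Fin p₁) ℝ)
    (D₁ : Matrix (Fin p₁) (Fin n) ℝ)
    (Q₂ : Matrix (Fin m₂) (Fin n) ℝ) (C₂ : Matrix (Fin m₂) (Fin p₂) ℝ)
    (D₂ : Matrix (Fin p₂) (Fin n) ℝ)
    (k₁ k₂ : ℕ)
    (h₁ : IsSparseFactorization Q₁ C₁ D₁ k₁)
    (h₂ : IsSparseFactorization Q₂ C₂ D₂ k₂)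
    (C : Matrix (Fin m₁ ⊕ Fin m₂) (Fin (p₁ + p₂)) ℝ)
    (hC : C = (Matrix.fromBlocks C₁ 0 0 C₂).submatrix id ⇑finSumFinEquiv.symm)
    (D : Matrix (Fin (p₁ + p₂)) (Fin n) ℝ)
    (hD : D = (Matrix.fromRows D₁ D₂).submatrix ⇑finSumFinEquiv.symm id) :
    Matrix.fromRows Q₁ Q₂ = C * D ∧
    ∀ j : Fin n, ((vsupp fun i => D i j).biUnion fun i => FO C i).card ≤ k₁ + k₂ := by
  
  classical
  obtain ⟨hQ₁, -, -, hk₁⟩ := h₁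
  obtain ⟨hQ₂, -, -, hk₂⟩ := h₂
  subst hC hD
  set e := (finSumFinEquiv : Fin p₁ ⊕ Fin p₂ ≃ Fin (p₁ + p₂)) with he
  constructor
  · rw [Matrix.submatrix_mul_equiv (Matrix.fromBlocks C₁ 0 0 C₂) (Matrix.fromRows D₁ D₂)
      id e.symm id, Matrix.submatrix_id_id, hQ₁, hQ₂]
    ext r c
    cases r with
    | inl r => simp [Matrix.mul_apply, Fintype.sum_sum_type]
    | inr r => simp [Matrix.mul_apply, Fintype.sum_sum_type]
  · intro j
    set C := (Matrix.fromBlocks C₁ 0 0 C₂).submatrix id ⇑e.symm with hC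
    set D := (Matrix.fromRows D₁ D₂).submatrix ⇑e.symm id with hD
    have hle : ∀ a b : Fin p₁, e (Sum.inl a) ≤ e (Sum.inl b) ↔ a ≤ b := by
      intro a b
      rw [he]
      simp only [finSumFinEquiv_apply_left, Fin.le_def, Fin.coe_castAdd]
    have hle₂ : ∀ a b : Fin p₂, e (Sum.inr a) ≤ e (Sum.inr b) ↔ a ≤ b := by
      intro a b
      rw [he]
      simp only [finSumFinEquiv_apply_right, Fin.le_def, Fin.coe_natAdd]
      omega
    have hlt : ∀ (a : Fin p₂) (b : Fin p₁), ¬ e (Sum.inr a) ≤ e (Sum.inl b) := by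
      intro a b
      rw [he]
      simp only [finSumFinEquiv_apply_left, finSumFinEquiv_apply_right,
        Fin.le_def, Fin.coe_natAdd, Fin.coe_castAdd]
      omega
    have FOl : ∀ a : Fin p₁, FO C (e (Sum.inl a)) = (FO C₁ a).image (fun x => e (Sum.inl x)) := by
      intro a
      ext i
      obtain ⟨s, rfl⟩ := e.surjective i
      cases s with
      | inl b =>
        simp only [mem_FO, Finset.mem_image, hle, hC,
          Matrix.submatrix_apply, id_eq, Equiv.symm_apply_apply, Sum.exists,
          Matrix.fromBlocks_apply₁₁, Matrix.fromBlocks_apply₂₁, ne_eq,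
          EmbeddingLike.apply_eq_iff_eq, Sum.inl.injEq]
        constructor
        · rintro ⟨h1, (⟨r, hr⟩ | ⟨r, hr⟩)⟩
          · exact ⟨b, ⟨h1, ⟨r, hr⟩⟩, rfl⟩
          · simp at hr
        · rintro ⟨x, ⟨h1, r, hr⟩, rfl⟩
          exact ⟨h1, Or.inl ⟨r, hr⟩⟩
      | inr b =>
        simp only [mem_FO, Finset.mem_image, hC,
          Matrix.submatrix_apply, id_eq, Equiv.symm_apply_apply, Sum.exists,
          Matrix.fromBlocks_apply₁₂, Matrix.fromBlocks_apply₂₁, ne_eq,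
          EmbeddingLike.apply_eq_iff_eq]
        simp
    have FOr : ∀ a : Fin p₂, FO C (e (Sum.inr a)) = (FO C₂ a).image (fun x => e (Sum.inr x)) := by
      intro a
      ext i
      obtain ⟨s, rfl⟩ := e.surjective i
      cases s with
      | inl b =>
        simp only [mem_FO, Finset.mem_image, hC,
          Matrix.submatrix_apply, id_eq, Equiv.symm_apply_apply, Sum.exists,
          ne_eq, EmbeddingLike.apply_eq_iff_eq]
        constructor
        · rintro ⟨h1, _⟩; exact absurd h1 (hlt a b)
        · rintro ⟨x, _, h⟩; exact absurd h (by simp)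
      | inr b =>
        simp only [mem_FO, Finset.mem_image, hle₂, hC,
          Matrix.submatrix_apply, id_eq, Equiv.symm_apply_apply, Sum.exists,
          Matrix.fromBlocks_apply₂₂, Matrix.fromBlocks_apply₁₂, ne_eq,
          EmbeddingLike.apply_eq_iff_eq, Sum.inr.injEq]
        constructor
        · rintro ⟨h1, (⟨r, hr⟩ | ⟨r, hr⟩)⟩
          · simp at hr
          · exact ⟨b, ⟨h1, ⟨r, hr⟩⟩, rfl⟩
        · rintro ⟨x, ⟨h1, r, hr⟩, rfl⟩
          exact ⟨h1, Or.inr ⟨r, hr⟩⟩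
    have hvD : vsupp (fun i => D i j) =
        ((vsupp fun i => D₁ i j).image (fun a => e (Sum.inl a))) ∪
        ((vsupp fun i => D₂ i j).image (fun a => e (Sum.inr a))) := by
      ext i
      obtain ⟨s, rfl⟩ := e.surjective i
      cases s <;>
        simp [mem_vsupp, hD, Finset.mem_union, Finset.mem_image,
          EmbeddingLike.apply_eq_iff_eq]
    have hbu : ∀ (s t : Finset (Fin (p₁ + p₂))),
        (s ∪ t).biUnion (FO C) = s.biUnion (FO C) ∪ t.biUnion (FO C) := by
      intro s t; ext x
      simp only [Finset.mem_biUnion, Finset.mem_union]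
      constructor
      · rintro ⟨a, (h | h), hx⟩
        exacts [Or.inl ⟨a, h, hx⟩, Or.inr ⟨a, h, hx⟩]
      · rintro (⟨a, h, hx⟩ | ⟨a, h, hx⟩)
        exacts [⟨a, Or.inl h, hx⟩, ⟨a, Or.inr h, hx⟩]
    rw [hvD, hbu]
    refine le_trans (Finset.card_union_le _ _) (Nat.add_le_add ?_ ?_)
    · rw [Finset.image_biUnion]
      have : ((vsupp fun i => D₁ i j).biUnion fun a => FO C (e (Sum.inl a))) =
          ((vsupp fun i => D₁ i j).biUnion (FO C₁)).image (fun x => e (Sum.inl x)) := by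
        rw [Finset.biUnion_image]
        exact Finset.biUnion_congr rfl (fun a _ => FOl a)
      rw [this]
      refine le_trans (le_of_eq (Finset.card_image_of_injective _ ?_)) (le_trans (le_of_eq (by congr <;> exact Subsingleton.elim _ _)) (hk₁ j))
      intro a b h
      exact Sum.inl_injective (e.injective h)
    · rw [Finset.image_biUnion]
      have : ((vsupp fun i => D₂ i j).biUnion fun a => FO C (e (Sum.inr a))) =
          ((vsupp fun i => D₂ i j).biUnion (FO C₂)).image (fun x => e (Sum.inr x)) := by
        rw [Finset.biUnion_image]
        exact Finset.biUnion_congr rfl (fun a _ => FOr a)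
      rw [this]
      refine le_trans (le_of_eq (Finset.card_image_of_injective _ ?_)) (le_trans (le_of_eq (by congr <;> exact Subsingleton.elim _ _)) (hk₂ j))
      intro a b h
      exact Sum.inr_injective (e.injective h)
end
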